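/- For n ≥ 2, the fan graph F_{1,n} satisfies: α(F_{1,n}) + α(L(F_{1,n})) = n if n is even and n + 1 if n is odd; and α(F_{1,n}) · α(L(F_{1,n})) = n²/4 if n is even and (n+1)²/4 if n is odd. -/

import Mathlib

open SimpleGraph

/-- The independence number of a graph: the maximum cardinality of a set of
pairwise non-adjacent vertices. -/
noncomputable def indepNum {V : Type*} (G : SimpleGraph V) : ℕ :=
  sSup {k | ∃ s : Set V, s.Pairwise (fun a b => ¬ G.Adj a b) ∧ s.ncard = k}

/-- The matching number of a graph: the maximum cardinality of a set of edges of
the graph, no two of which share an endpoint. -/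
noncomputable def matchNum {V : Type*} (G : SimpleGraph V) : ℕ :=
  sSup {k | ∃ M : Set (Sym2 V), M ⊆ G.edgeSet ∧
    (M.Pairwise fun e f => ∀ v : V, ¬(v ∈ e ∧ v ∈ f)) ∧ M.ncard = k}

/-- The fan graph `F_{1,n}`: the join `K_1 + P_n`, i.e. a path on `n` vertices
together with an apex vertex (`none`) adjacent to every path vertex. -/
def fanGraph (n : ℕ) : SimpleGraph (Option (Fin n)) :=
  SimpleGraph.fromRel fun x y =>
    match x, y with
    | none, some _ => True
    | some a, some b => (pathGraph n).Adj a b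
    | _, _ => False

lemma indepNum_eq_of {V : Type*} (G : SimpleGraph V) (k : ℕ)
    (hw : ∃ s : Set V, s.Pairwise (fun a b => ¬ G.Adj a b) ∧ s.ncard = k)
    (hub : ∀ s : Set V, s.Pairwise (fun a b => ¬ G.Adj a b) → s.ncard ≤ k) :
    _root_.indepNum G = k := by
  refine le_antisymm (csSup_le ⟨k, hw⟩ ?_) (le_csSup ⟨k, ?_⟩ hw)
  · rintro m ⟨s, hs, rfl⟩; exact hub s hs
  · rintro m ⟨s, hs, rfl⟩; exact hub s hs

lemma fan_adj_some {n : ℕ} {a b : Fin n} :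
    (fanGraph n).Adj (some a) (some b) ↔ ((a : ℕ) + 1 = b ∨ (b : ℕ) + 1 = a) := by
  simp only [fanGraph, fromRel_adj, pathGraph_adj, ne_eq, Option.some.injEq, Fin.ext_iff]
  omega

lemma fan_adj_none {n : ℕ} {a : Fin n} : (fanGraph n).Adj none (some a) := by
  simp [fanGraph, fromRel_adj]

/-- A near-perfect matching of the fan graph. -/
noncomputable def fanEdge (n : ℕ) (i : Fin ((n + 1) / 2)) : Sym2 (Option (Fin n)) :=
  if h : 2 * i.val + 1 < n then
    s(some ⟨2 * i.val, by omega⟩, some ⟨2 * i.val + 1, h⟩)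
  else
    s(none, some ⟨2 * i.val, by have := i.2; omega⟩)

lemma fanEdge_mem_edgeSet {n : ℕ} (i : Fin ((n + 1) / 2)) :
    fanEdge n i ∈ (fanGraph n).edgeSet := by
  unfold fanEdge
  split_ifs with h
  · rw [mem_edgeSet, fan_adj_some]; left; simp
  · rw [mem_edgeSet]; exact fan_adj_none

lemma fanEdge_mem_inj {n : ℕ} {i j : Fin ((n + 1) / 2)} {v : Option (Fin n)}
    (hi : v ∈ fanEdge n i) (hj : v ∈ fanEdge n j) : i = j := by
  have h2i := i.2
  have h2j := j.2
  unfold fanEdge at hi hj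
  apply Fin.ext
  split_ifs at hi hj with h1 h2 <;>
    simp only [Sym2.mem_iff] at hi hj <;>
    rcases hi with rfl | rfl <;>
    simp_all only [Option.some.injEq, Fin.ext_iff, reduceCtorEq, false_or, or_false] <;>
    omega

lemma fan_indepNum (n : ℕ) (hn : 1 ≤ n) : _root_.indepNum (fanGraph n) = (n + 1) / 2 := by
  apply indepNum_eq_of
  · -- witness: even-indexed path vertices
    refine ⟨Set.range (fun i : Fin ((n + 1) / 2) =>
      (some ⟨2 * i.val, by have := i.2; omega⟩ : Option (Fin n))), ?_, ?_⟩
    · rintro x ⟨i, rfl⟩ y ⟨j, rfl⟩ hxy hadj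
      rw [fan_adj_some] at hadj
      simp only [ne_eq, Option.some.injEq, Fin.ext_iff] at hxy hadj
      omega
    · have hinj : Function.Injective (fun i : Fin ((n + 1) / 2) =>
          (some ⟨2 * i.val, by have := i.2; omega⟩ : Option (Fin n))) := by
        intro i j h
        simp only [Option.some.injEq, Fin.ext_iff] at h
        exact Fin.ext (by omega)
      rw [← Set.image_univ, Set.ncard_image_of_injective _ hinj, Set.ncard_univ,
        Nat.card_eq_fintype_card, Fintype.card_fin]
  · intro s hs
    by_cases hnone : none ∈ s
    · have hsub : s ⊆ {none} := by
        rintro (_ | a) hx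
        · rfl
        · exact absurd fan_adj_none (hs hnone hx (by simp))
      calc s.ncard ≤ ({none} : Set (Option (Fin n))).ncard :=
            Set.ncard_le_ncard hsub (Set.finite_singleton _)
        _ = 1 := Set.ncard_singleton _
        _ ≤ (n + 1) / 2 := by omega
    · set g : Option (Fin n) → ℕ := fun x => match x with
        | none => 0
        | some a => a.val / 2 with hg
      have hinj : Set.InjOn g s := by
        rintro (_ | a) hx y hy hxy
        · exact absurd hx hnone
        rcases y with _ | b
        · exact absurd hy hnone
        by_contra hne
        have hab : a ≠ b := fun h => hne (by rw [h])
        have hna : ¬ (fanGraph n).Adj (some a) (some b) := hs hx hy (by simpa using hab)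
        rw [fan_adj_some] at hna
        simp only [hg] at hxy
        have hab' : a.val ≠ b.val := fun h => hab (Fin.ext h)
        omega
      have hsub : g '' s ⊆ ↑(Finset.range ((n + 1) / 2)) := by
        rintro _ ⟨x, hx, rfl⟩
        rcases x with _ | a
        · exact absurd hx hnone
        · simp only [hg, Finset.coe_range, Set.mem_Iio]
          have := a.2; omega
      calc s.ncard = (g '' s).ncard := (Set.ncard_image_of_injOn hinj).symm
        _ ≤ ((Finset.range ((n + 1) / 2) : Finset ℕ) : Set ℕ).ncard :=
            Set.ncard_le_ncard hsub (Finset.finite_toSet _)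
        _ = (n + 1) / 2 := by rw [Set.ncard_coe_finset, Finset.card_range]

lemma fan_indepNum_lineGraph (n : ℕ) (hn : 1 ≤ n) :
    _root_.indepNum (fanGraph n).lineGraph = (n + 1) / 2 := by
  apply indepNum_eq_of
  · set F : Fin ((n + 1) / 2) → (fanGraph n).edgeSet :=
      fun i => ⟨fanEdge n i, fanEdge_mem_edgeSet i⟩ with hF
    refine ⟨Set.range F, ?_, ?_⟩
    · rintro _ ⟨i, rfl⟩ _ ⟨j, rfl⟩ hne hadj
      rw [lineGraph_adj_iff_exists] at hadj
      obtain ⟨-, v, hvi, hvj⟩ := hadj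
      exact hne (by rw [fanEdge_mem_inj hvi hvj])
    · have hinj : Function.Injective F := by
        intro i j h
        have : fanEdge n i = fanEdge n j := congrArg Subtype.val h
        have hv : (fanEdge n i).out.1 ∈ fanEdge n j := this ▸ Sym2.out_fst_mem _
        exact fanEdge_mem_inj (Sym2.out_fst_mem _) hv
      rw [← Set.image_univ, Set.ncard_image_of_injective _ hinj, Set.ncard_univ,
        Nat.card_eq_fintype_card, Fintype.card_fin]
  · intro s hs
    -- distinct edges in s share no vertex
    have hdisj : ∀ e ∈ s, ∀ f ∈ s, ∀ v : Option (Fin n),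
        v ∈ (e : Sym2 (Option (Fin n))) → v ∈ (f : Sym2 (Option (Fin n))) → e = f := by
      intro e he f hf v hve hvf
      by_contra hne
      exact hs he hf hne (lineGraph_adj_iff_exists.2 ⟨hne, v, hve, hvf⟩)
    set Φ : ↥s × Bool → Option (Fin n) := fun p =>
      if p.2 then (p.1.val.val).out.1 else (p.1.val.val).out.2 with hΦ
    have hΦmem : ∀ p : ↥s × Bool, Φ p ∈ (p.1.val : Sym2 (Option (Fin n))) := by
      rintro ⟨e, b⟩
      by_cases hb : b <;> simp only [hΦ, hb, if_true, if_false, Bool.false_eq_true] <;>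
        [exact Sym2.out_fst_mem _; exact Sym2.out_snd_mem _]
    have hΦinj : Function.Injective Φ := by
      rintro ⟨e, b⟩ ⟨f, c⟩ h
      have h2 : Φ (e, b) ∈ (f.val.val : Sym2 (Option (Fin n))) := by
        rw [h]; exact hΦmem (f, c)
      have hee : e.val = f.val := hdisj _ e.2 _ f.2 _ (hΦmem (e, b)) h2
      have heq : (e : ↥s) = f := Subtype.ext hee
      subst heq
      have hnd : ¬ (e.val.val).IsDiag :=
        (fanGraph n).not_isDiag_of_mem_edgeSet e.val.2
      have hout : (e.val.val).out.1 ≠ (e.val.val).out.2 := by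
        intro hoe
        apply hnd
        have : s((e.val.val).out.1, (e.val.val).out.2) = e.val.val := by
          rw [Sym2.mk, Prod.mk.eta, Quot.out_eq]
        rw [← this, hoe]
        exact Sym2.mk_isDiag_iff.2 rfl
      simp only [hΦ] at h
      rcases b <;> rcases c <;> simp_all
    have hcard : Nat.card (↥s × Bool) ≤ Nat.card (Option (Fin n)) :=
      Nat.card_le_card_of_injective Φ hΦinj
    rw [Nat.card_prod, Nat.card_coe_set_eq, Nat.card_eq_fintype_card,
      Nat.card_eq_fintype_card, Fintype.card_bool, Fintype.card_option,
      Fintype.card_fin] at hcard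
    omega

/-- For `n ≥ 2`: `α(F_{1,n}) + α(L(F_{1,n}))` is `n` if `n` is even and `n + 1`
if `n` is odd, and `α(F_{1,n}) · α(L(F_{1,n}))` is `n²/4` if `n` is even and
`(n+1)²/4` if `n` is odd. -/
theorem fan_indepNum_add_mul_indepNum_lineGraph (n : ℕ) (hn : 2 ≤ n) :
    (Even n → _root_.indepNum (fanGraph n) + _root_.indepNum (fanGraph n).lineGraph = n) ∧
    (Odd n → _root_.indepNum (fanGraph n) + _root_.indepNum (fanGraph n).lineGraph = n + 1) ∧
    (Even n → _root_.indepNum (fanGraph n) * _root_.indepNum (fanGraph n).lineGraph = n ^ 2 / 4) ∧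
    (Odd n → _root_.indepNum (fanGraph n) * _root_.indepNum (fanGraph n).lineGraph = (n + 1) ^ 2 / 4) := by
  have h1 : 1 ≤ n := by omega
  rw [fan_indepNum n h1, fan_indepNum_lineGraph n h1]
  refine ⟨fun he => ?_, fun ho => ?_, fun he => ?_, fun ho => ?_⟩
  · obtain ⟨m, rfl⟩ := he; omega
  · obtain ⟨m, rfl⟩ := ho; omega
  · obtain ⟨m, rfl⟩ := he
    have h2 : (m + m + 1) / 2 = m := by omega
    have h3 : (m + m) ^ 2 = 4 * (m * m) := by ring
    rw [h2, h3, Nat.mul_div_cancel_left _ (by norm_num)]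
  · obtain ⟨m, rfl⟩ := ho
    have h2 : (2 * m + 1 + 1) / 2 = m + 1 := by omega
    have h3 : (2 * m + 1 + 1) ^ 2 = 4 * ((m + 1) * (m + 1)) := by ring
    rw [h2, h3, Nat.mul_div_cancel_left _ (by norm_num)]
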